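/- Let f(x;μ) be a regular natural exponential family with quadratic variance function, and g(x;μ,λ) = f(x;μ) + ∑ᵢ₌₂ʳ λᵢ f⁽ⁱ⁾(x;μ) its local mixture model. Then at λ = 0, the Fisher information matrix in the (μ, λ) parametrization is block diagonal: ∫ (∂/∂μ log g)(∂/∂λᵢ log g) f(x;μ) dν(x) = 0 for all i = 2,…,r. -/

import Mathlib

open MeasureTheory

namespace LMPO

open Real

/-- `y^n e^{-δ y} ≤ n!/δ^n` for `y ≥ 0`. -/
lemma pow_mul_exp_neg_le (n : ℕ) {δ y : ℝ} (hδ : 0 < δ) (hy : 0 ≤ y) :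
    y ^ n * Real.exp (-(δ * y)) ≤ n.factorial / δ ^ n := by
  have h1 : (δ * y) ^ n / n.factorial ≤ Real.exp (δ * y) :=
    Real.pow_div_factorial_le_exp _ (by positivity) n
  have hfac : (0:ℝ) < n.factorial := by positivity
  have h2 : (δ * y) ^ n ≤ n.factorial * Real.exp (δ * y) := by
    rw [div_le_iff₀ hfac] at h1; linarith [h1]
  rw [Real.exp_neg]
  rw [mul_pow] at h2
  have hexp : (0:ℝ) < Real.exp (δ * y) := Real.exp_pos _
  rw [div_le_iff₀ (by positivity), le_div_iff₀ (by positivity)] at *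
  calc y ^ n * (Real.exp (δ * y))⁻¹ * δ ^ n
      = (δ ^ n * y ^ n) * (Real.exp (δ * y))⁻¹ := by ring
    _ ≤ (n.factorial * Real.exp (δ * y)) * (Real.exp (δ * y))⁻¹ := by
        apply mul_le_mul_of_nonneg_right h2 (by positivity)
    _ = n.factorial := by field_simp

lemma abs_pow_exp_bound (n : ℕ) {δ l h c : ℝ} (hδ : 0 < δ) (h1 : l + δ ≤ c)
    (h2 : c ≤ h - δ) (x : ℝ) :
    |x| ^ n * Real.exp (c * x) ≤ n.factorial / δ ^ n * (Real.exp (l * x) + Real.exp (h * x)) := by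
  rcases le_or_gt 0 x with hx | hx
  · have hb : Real.exp (c * x) ≤ Real.exp ((h - δ) * x) :=
      Real.exp_le_exp.2 (mul_le_mul_of_nonneg_right h2 hx)
    have : |x| ^ n * Real.exp (c * x) ≤ x ^ n * Real.exp (-(δ*x)) * Real.exp (h * x) := by
      rw [abs_of_nonneg hx]
      calc x ^ n * Real.exp (c*x) ≤ x ^ n * Real.exp ((h - δ) * x) := by
            exact mul_le_mul_of_nonneg_left hb (by positivity)
        _ = x ^ n * Real.exp (-(δ*x)) * Real.exp (h*x) := by
            rw [mul_assoc, ← Real.exp_add]; ring_nf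
    refine this.trans ?_
    have := pow_mul_exp_neg_le n hδ hx
    have hE : (0:ℝ) < Real.exp (h*x) := Real.exp_pos _
    calc x ^ n * Real.exp (-(δ*x)) * Real.exp (h*x)
        ≤ (n.factorial / δ ^ n) * Real.exp (h*x) := mul_le_mul_of_nonneg_right this hE.le
      _ ≤ n.factorial / δ ^ n * (Real.exp (l * x) + Real.exp (h * x)) := by
          have : (0:ℝ) < Real.exp (l*x) := Real.exp_pos _
          have hfac : (0:ℝ) ≤ (n.factorial : ℝ) / δ ^ n := by positivity
          nlinarith
  · have hb : Real.exp (c * x) ≤ Real.exp ((l + δ) * x) :=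
      Real.exp_le_exp.2 (by nlinarith)
    have hy : 0 ≤ -x := by linarith
    have : |x| ^ n * Real.exp (c * x) ≤ (-x) ^ n * Real.exp (-(δ*(-x))) * Real.exp (l * x) := by
      rw [abs_of_neg hx]
      calc (-x) ^ n * Real.exp (c*x) ≤ (-x) ^ n * Real.exp ((l + δ) * x) := by
            exact mul_le_mul_of_nonneg_left hb (by positivity)
        _ = (-x) ^ n * Real.exp (-(δ*(-x))) * Real.exp (l*x) := by
            rw [mul_assoc, ← Real.exp_add]; ring_nf
    refine this.trans ?_
    have := pow_mul_exp_neg_le n hδ hy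
    have hE : (0:ℝ) < Real.exp (l*x) := Real.exp_pos _
    calc (-x) ^ n * Real.exp (-(δ*(-x))) * Real.exp (l*x)
        ≤ (n.factorial / δ ^ n) * Real.exp (l*x) := mul_le_mul_of_nonneg_right this hE.le
      _ ≤ n.factorial / δ ^ n * (Real.exp (l * x) + Real.exp (h * x)) := by
          have : (0:ℝ) < Real.exp (h*x) := Real.exp_pos _
          have hfac : (0:ℝ) ≤ (n.factorial : ℝ) / δ ^ n := by positivity
          nlinarith

variable (θ κ : ℝ → ℝ) (M : Set ℝ)

/-- Coefficients of the polynomial `P_k` with `f⁽ᵏ⁾ = P_k(x) f`. -/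
noncomputable def c : ℕ → ℕ → ℝ → ℝ
  | 0 => fun j _ => if j = 0 then 1 else 0
  | k+1 => fun j m =>
      derivWithin (c k j) M m
      + derivWithin θ M m * (if j = 0 then 0 else c k (j-1) m)
      - derivWithin κ M m * c k j m

/-- The polynomial factor: `f⁽ᵏ⁾(x;m) = B k x m * f(x;m)`. -/
noncomputable def B (k : ℕ) (x m : ℝ) : ℝ :=
  ∑ j ∈ Finset.range (k+1), c θ κ M k j m * x ^ j

variable {θ κ M}

lemma c_zero_of_lt (hM : IsOpen M) : ∀ k j : ℕ, k < j → ∀ m ∈ M, c θ κ M k j m = 0 := by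
  intro k
  induction k with
  | zero => intro j hj m _; simp [c, (show j ≠ 0 by omega)]
  | succ k ih =>
      intro j hj m hm
      have hj0 : j ≠ 0 := by omega
      have h2 : c θ κ M k (j-1) m = 0 := ih (j-1) (by omega) m hm
      have hd : derivWithin (c θ κ M k j) M m = 0 := by
        rw [derivWithin_of_isOpen hM hm]
        have : Set.EqOn (c θ κ M k j) (fun _ => 0) M := fun u hu => ih j (by omega) u hu
        rw [Filter.EventuallyEq.deriv_eq (f := fun _ => (0:ℝ))]
        · exact deriv_const _ _
        · exact Filter.eventuallyEq_of_mem (hM.mem_nhds hm) this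
      simp [c, hd, h2, hj0, ih j (by omega) m hm]

lemma c_contDiffOn (hM : IsOpen M) (hθ : ContDiffOn ℝ ⊤ θ M) (hκ : ContDiffOn ℝ ⊤ κ M) :
    ∀ k j, ContDiffOn ℝ ⊤ (c θ κ M k j) M := by
  intro k
  induction k with
  | zero =>
      intro j
      by_cases hj : j = 0
      · simp only [c, hj, if_pos]; exact contDiffOn_const
      · simp only [c, if_neg hj]; exact contDiffOn_const
  | succ k ih =>
      intro j
      have hd : UniqueDiffOn ℝ M := hM.uniqueDiffOn
      have h1 : ContDiffOn ℝ ⊤ (derivWithin (c θ κ M k j) M) M :=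
        (ih j).derivWithin hd le_top
      have hθ' : ContDiffOn ℝ ⊤ (derivWithin θ M) M := hθ.derivWithin hd le_top
      have hκ' : ContDiffOn ℝ ⊤ (derivWithin κ M) M := hκ.derivWithin hd le_top
      have hmid : ContDiffOn ℝ ⊤ (fun m => (if j = 0 then (0:ℝ) else c θ κ M k (j-1) m)) M := by
        by_cases hj : j = 0
        · simp only [if_pos hj]; exact contDiffOn_const
        · simp only [if_neg hj]; exact ih (j-1)
      show ContDiffOn ℝ ⊤ (fun m =>
        derivWithin (c θ κ M k j) M m
        + derivWithin θ M m * (if j = 0 then 0 else c θ κ M k (j-1) m)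
        - derivWithin κ M m * c θ κ M k j m) M
      exact (h1.add (hθ'.mul hmid)).sub (hκ'.mul (ih j))

/-- The key pointwise derivative computation. -/
lemma hasDerivAt_B_mul_exp (hM : IsOpen M) (hθ : ContDiffOn ℝ ⊤ θ M) (hκ : ContDiffOn ℝ ⊤ κ M)
    (x : ℝ) {t : ℝ} (ht : t ∈ M) (k : ℕ) :
    HasDerivAt (fun u => B θ κ M k x u * Real.exp (θ u * x - κ u))
      (B θ κ M (k+1) x t * Real.exp (θ t * x - κ t)) t := by
  have hMn : M ∈ nhds t := hM.mem_nhds ht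
  have hθd : HasDerivAt θ (derivWithin θ M t) t := by
    rw [derivWithin_of_isOpen hM ht]
    exact ((hθ.differentiableOn (by simp) t ht).differentiableAt hMn).hasDerivAt
  have hκd : HasDerivAt κ (derivWithin κ M t) t := by
    rw [derivWithin_of_isOpen hM ht]
    exact ((hκ.differentiableOn (by simp) t ht).differentiableAt hMn).hasDerivAt
  have hcd : ∀ j, HasDerivAt (c θ κ M k j) (derivWithin (c θ κ M k j) M t) t := by
    intro j
    rw [derivWithin_of_isOpen hM ht]
    exact (((c_contDiffOn hM hθ hκ k j).differentiableOn (by simp) t ht).differentiableAt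
      hMn).hasDerivAt
  set dθ := derivWithin θ M t
  set dκ := derivWithin κ M t
  have he : HasDerivAt (fun u => Real.exp (θ u * x - κ u))
      (Real.exp (θ t * x - κ t) * (dθ * x - dκ)) t := by
    have : HasDerivAt (fun u => θ u * x - κ u) (dθ * x - dκ) t :=
      (hθd.mul_const x).sub hκd
    exact this.exp
  have hB : HasDerivAt (fun u => B θ κ M k x u)
      (∑ j ∈ Finset.range (k+1), derivWithin (c θ κ M k j) M t * x ^ j) t := by
    apply HasDerivAt.fun_sum
    intro j _
    exact (hcd j).mul_const (x ^ j)
  have hprod := hB.fun_mul he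
  refine hprod.congr_deriv ?_
  have expand : B θ κ M (k+1) x t
      = (∑ j ∈ Finset.range (k+1), derivWithin (c θ κ M k j) M t * x ^ j)
        + (dθ * x - dκ) * B θ κ M k x t := by
    have hsplit : ∀ j ∈ Finset.range (k+2),
        c θ κ M (k+1) j t * x ^ j
        = derivWithin (c θ κ M k j) M t * x ^ j
          + dθ * ((if j = 0 then 0 else c θ κ M k (j-1) t) * x ^ j)
          - dκ * (c θ κ M k j t * x ^ j) := by
      intro j _
      simp only [c]; ring
    rw [B, Finset.sum_congr rfl hsplit]
    rw [Finset.sum_sub_distrib, Finset.sum_add_distrib, ← Finset.mul_sum, ← Finset.mul_sum]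
    have htop1 : derivWithin (c θ κ M k (k+1)) M t = 0 := by
      rw [derivWithin_of_isOpen hM ht]
      rw [Filter.EventuallyEq.deriv_eq (f := fun _ => (0:ℝ))]
      · exact deriv_const _ _
      · exact Filter.eventuallyEq_of_mem hMn fun u hu => c_zero_of_lt hM k (k+1) (by omega) u hu
    have htop2 : c θ κ M k (k+1) t = 0 := c_zero_of_lt hM k (k+1) (by omega) t ht
    rw [Finset.sum_range_succ (fun j => derivWithin (c θ κ M k j) M t * x ^ j) (k+1),
      htop1, zero_mul, add_zero]
    have hstep : ∀ j ∈ Finset.range (k+1),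
        (if j+1 = 0 then (0:ℝ) else c θ κ M k (j+1-1) t) * x ^ (j+1)
        = x * (c θ κ M k j t * x ^ j) := by
      intro j _
      rw [if_neg (Nat.succ_ne_zero j), Nat.add_sub_cancel, pow_succ]; ring
    have hshift : ∑ j ∈ Finset.range (k+2), (if j = 0 then (0:ℝ) else c θ κ M k (j-1) t) * x ^ j
        = x * ∑ j ∈ Finset.range (k+1), c θ κ M k j t * x ^ j := by
      rw [Finset.sum_range_succ' (fun j => (if j = 0 then (0:ℝ) else c θ κ M k (j-1) t) * x ^ j)
        (k+1), Finset.sum_congr rfl hstep, if_pos rfl, zero_mul, add_zero, ← Finset.mul_sum]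
    rw [hshift,
      Finset.sum_range_succ (fun j => c θ κ M k j t * x ^ j) (k+1), htop2, zero_mul,
      add_zero, B]
    ring
  rw [expand]; ring

lemma B_zero (x m : ℝ) : B θ κ M 0 x m = 1 := by
  simp [B, c]

lemma iteratedDerivWithin_eq_B (hM : IsOpen M) (hθ : ContDiffOn ℝ ⊤ θ M)
    (hκ : ContDiffOn ℝ ⊤ κ M) (x : ℝ) :
    ∀ k, ∀ m ∈ M, iteratedDerivWithin k (fun u => Real.exp (θ u * x - κ u)) M m
      = B θ κ M k x m * Real.exp (θ m * x - κ m) := by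
  intro k
  induction k with
  | zero => intro m hm; simp [iteratedDerivWithin_zero, B_zero]
  | succ k ih =>
      intro m hm
      rw [iteratedDerivWithin_succ, derivWithin_of_isOpen hM hm]
      have heq : deriv (iteratedDerivWithin k (fun u => Real.exp (θ u * x - κ u)) M) m
          = deriv (fun u => B θ κ M k x u * Real.exp (θ u * x - κ u)) m :=
        Filter.EventuallyEq.deriv_eq
          (Filter.eventuallyEq_of_mem (hM.mem_nhds hm) fun u hu => ih u hu)
      rw [heq, (hasDerivAt_B_mul_exp hM hθ hκ x hm k).deriv]

lemma exists_domination (ν : Measure ℝ) (f : ℝ → ℝ → ℝ)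
    (hf : ∀ x m, f x m = Real.exp (θ m * x - κ m))
    (hM : IsOpen M) (hθc : ContinuousOn θ M) (hκc : ContinuousOn κ M)
    (hinj : Set.InjOn θ M)
    (hint : ∀ m ∈ M, Integrable (fun x => f x m) ν)
    {μ : ℝ} (hμ : μ ∈ M) :
    ∃ ε > 0, Metric.ball μ ε ⊆ M ∧ ∀ n : ℕ, ∃ b : ℝ → ℝ, Integrable b ν ∧
      ∀ t ∈ Metric.ball μ ε, ∀ x, |x| ^ n * f x t ≤ b x := by
  obtain ⟨ρ0, hρ0, hball⟩ := Metric.isOpen_iff.1 hM μ hμ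
  set ρ := ρ0 / 2 with hρdef
  have hρ : 0 < ρ := by positivity
  have hIccM : Set.Icc (μ - ρ) (μ + ρ) ⊆ M := by
    intro t ht
    apply hball
    rw [Metric.mem_ball, Real.dist_eq, abs_lt]
    constructor <;> [skip; skip] <;> (simp only [Set.mem_Icc] at ht; cases ht; linarith)
  set u := μ - ρ
  set v := μ + ρ
  set u' := μ - ρ/2
  set v' := μ + ρ/2
  have huv : u ≤ v := by simp only [u, v]; linarith
  have hu'M : Set.Icc u' v' ⊆ Set.Icc u v :=
    Set.Icc_subset_Icc (by simp [u, u']; linarith) (by simp [v, v']; linarith)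
  refine ⟨ρ/2, by positivity, ?_, ?_⟩
  · intro t ht
    rw [Metric.mem_ball, Real.dist_eq, abs_lt] at ht
    exact hIccM ⟨by simp only [u]; linarith, by simp only [v]; linarith⟩
  have hballIcc : Metric.ball μ (ρ/2) ⊆ Set.Icc u' v' := by
    intro t ht
    rw [Metric.mem_ball, Real.dist_eq, abs_lt] at ht
    exact ⟨by simp only [u']; linarith, by simp only [v']; linarith⟩
  have huM : u ∈ M := hIccM ⟨le_refl u, huv⟩
  have hvM : v ∈ M := hIccM ⟨huv, le_refl v⟩
  have key : ∃ l h δ : ℝ, ∃ s₁ ∈ M, ∃ s₂ ∈ M, 0 < δ ∧ θ s₁ = l ∧ θ s₂ = h ∧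
      ∀ t ∈ Metric.ball μ (ρ/2), l + δ ≤ θ t ∧ θ t ≤ h - δ := by
    have hcont : ContinuousOn θ (Set.Icc u v) := hθc.mono hIccM
    have hinj' : Set.InjOn θ (Set.Icc u v) := hinj.mono hIccM
    have huu' : u < u' := by simp only [u, u']; linarith
    have hv'v : v' < v := by simp only [v, v']; linarith
    have hu'v' : u' ≤ v' := by simp only [u', v']; linarith
    have hmemu : u ∈ Set.Icc u v := ⟨le_refl u, huv⟩
    have hmemv : v ∈ Set.Icc u v := ⟨huv, le_refl v⟩
    have hmemu' : u' ∈ Set.Icc u v := hu'M ⟨le_refl u', hu'v'⟩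
    have hmemv' : v' ∈ Set.Icc u v := hu'M ⟨hu'v', le_refl v'⟩
    rcases ContinuousOn.strictMonoOn_of_injOn_Icc' huv hcont hinj' with hmono | hanti
    · refine ⟨θ u, θ v, min (θ u' - θ u) (θ v - θ v'), u, huM, v, hvM, ?_, rfl, rfl, ?_⟩
      · exact lt_min (sub_pos.2 (hmono hmemu hmemu' huu')) (sub_pos.2 (hmono hmemv' hmemv hv'v))
      · intro t ht
        obtain ⟨ht1, ht2⟩ := hballIcc ht
        have htmem : t ∈ Set.Icc u v := hu'M ⟨ht1, ht2⟩
        have h1 : θ u' ≤ θ t := hmono.monotoneOn hmemu' htmem ht1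
        have h2 : θ t ≤ θ v' := hmono.monotoneOn htmem hmemv' ht2
        constructor
        · have := min_le_left (θ u' - θ u) (θ v - θ v'); linarith
        · have := min_le_right (θ u' - θ u) (θ v - θ v'); linarith
    · refine ⟨θ v, θ u, min (θ v' - θ v) (θ u - θ u'), v, hvM, u, huM, ?_, rfl, rfl, ?_⟩
      · exact lt_min (sub_pos.2 (hanti hmemv' hmemv hv'v)) (sub_pos.2 (hanti hmemu hmemu' huu'))
      · intro t ht
        obtain ⟨ht1, ht2⟩ := hballIcc ht
        have htmem : t ∈ Set.Icc u v := hu'M ⟨ht1, ht2⟩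
        have h1 : θ t ≤ θ u' := hanti.antitoneOn hmemu' htmem ht1
        have h2 : θ v' ≤ θ t := hanti.antitoneOn htmem hmemv' ht2
        constructor
        · have := min_le_left (θ v' - θ v) (θ u - θ u'); linarith
        · have := min_le_right (θ v' - θ v) (θ u - θ u'); linarith
  obtain ⟨l, h, δ, s₁, hs₁, s₂, hs₂, hδ, hl, hh, hbound⟩ := key
  have hκcont : ContinuousOn (fun t => -κ t) (Set.Icc u' v') :=
    (hκc.mono fun t ht => hIccM (hu'M ht)).neg
  obtain ⟨t₀, ht₀, hK'⟩ := (isCompact_Icc).exists_isMaxOn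
    ⟨u', ⟨le_refl u', by simp [u', v']; linarith⟩⟩ hκcont
  have hK : ∀ t ∈ Set.Icc u' v', -κ t ≤ -κ t₀ := hK'
  set K := Real.exp (-κ t₀)
  have hKpos : 0 < K := Real.exp_pos _
  have hKb : ∀ t ∈ Metric.ball μ (ρ/2), Real.exp (-κ t) ≤ K := by
    intro t ht
    exact Real.exp_le_exp.2 (hK t (hballIcc ht))
  have hintexp : ∀ s ∈ M, Integrable (fun x => Real.exp (θ s * x)) ν := by
    intro s hs
    have : (fun x => Real.exp (θ s * x)) = fun x => Real.exp (κ s) * f x s := by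
      funext x
      rw [hf, ← Real.exp_add]; ring_nf
    rw [this]
    exact (hint s hs).const_mul _
  intro n
  refine ⟨fun x => (n.factorial / δ ^ n * K) * (Real.exp (l * x) + Real.exp (h * x)), ?_, ?_⟩
  · refine Integrable.const_mul ?_ _
    have h1 := hintexp s₁ hs₁
    have h2 := hintexp s₂ hs₂
    rw [hl] at h1; rw [hh] at h2
    exact h1.add h2
  · intro t ht x
    have hft : f x t = Real.exp (θ t * x) * Real.exp (-κ t) := by
      rw [hf, ← Real.exp_add]; ring_nf
    have hb := hbound t ht
    have habs := abs_pow_exp_bound n hδ hb.1 hb.2 x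
    calc |x| ^ n * f x t = (|x| ^ n * Real.exp (θ t * x)) * Real.exp (-κ t) := by
          rw [hft]; ring
      _ ≤ (n.factorial / δ ^ n * (Real.exp (l * x) + Real.exp (h * x))) * K := by
          apply mul_le_mul habs (hKb t ht) (Real.exp_pos _).le
          positivity
      _ = (n.factorial / δ ^ n * K) * (Real.exp (l * x) + Real.exp (h * x)) := by ring

lemma interchange (ν : Measure ℝ) (f : ℝ → ℝ → ℝ)
    (hf : ∀ x m, f x m = Real.exp (θ m * x - κ m))
    (hM : IsOpen M) (hθ : ContDiffOn ℝ ⊤ θ M) (hκ : ContDiffOn ℝ ⊤ κ M)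
    (hinj : Set.InjOn θ M)
    (hint : ∀ m ∈ M, Integrable (fun x => f x m) ν)
    (p k : ℕ) {m : ℝ} (hm : m ∈ M) :
    Integrable (fun x => x ^ p * (B θ κ M k x m * f x m)) ν ∧
    HasDerivAt (fun t => ∫ x, x ^ p * (B θ κ M k x t * f x t) ∂ν)
      (∫ x, x ^ p * (B θ κ M (k+1) x m * f x m) ∂ν) m := by
  obtain ⟨ε, hε, hsub, hbnd⟩ := exists_domination ν f hf hM
    (hθ.continuousOn) (hκ.continuousOn) hinj hint hm
  choose b hbint hble using hbnd
  have hε2 : 0 < ε / 2 := by positivity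
  have hball2 : Metric.ball m (ε/2) ⊆ Metric.ball m ε :=
    Metric.ball_subset_ball (by linarith)
  have hcb : Metric.closedBall m (ε/2) ⊆ Metric.ball m ε := by
    intro t ht
    rw [Metric.mem_closedBall] at ht
    rw [Metric.mem_ball]
    linarith
  have hfpos : ∀ x t, 0 < f x t := by intro x t; rw [hf]; exact Real.exp_pos _
  have coefC : ∀ K : ℕ, ∃ C : ℝ, 0 ≤ C ∧ ∀ t ∈ Metric.closedBall m (ε/2),
      ∀ j ∈ Finset.range (K+1), |c θ κ M K j t| ≤ C := by
    intro K
    have hccont : ContinuousOn (fun t => ∑ j ∈ Finset.range (K+1), |c θ κ M K j t|)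
        (Metric.closedBall m (ε/2)) := by
      apply continuousOn_finset_sum
      intro j _
      exact (((c_contDiffOn hM hθ hκ K j).continuousOn).mono
        (fun t ht => hsub (hcb ht))).abs
    obtain ⟨t₀, _, hmax⟩ := (isCompact_closedBall m (ε/2)).exists_isMaxOn
      ⟨m, Metric.mem_closedBall_self hε2.le⟩ hccont
    refine ⟨∑ j ∈ Finset.range (K+1), |c θ κ M K j t₀|, by positivity, ?_⟩
    intro t ht j hj
    calc |c θ κ M K j t| ≤ ∑ j ∈ Finset.range (K+1), |c θ κ M K j t| :=
          Finset.single_le_sum (f := fun j => |c θ κ M K j t|) (fun j _ => abs_nonneg _) hj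
      _ ≤ _ := hmax ht
  have mainBound : ∀ K : ℕ, ∃ bd : ℝ → ℝ, Integrable bd ν ∧
      ∀ t ∈ Metric.ball m (ε/2), ∀ x, ‖x ^ p * (B θ κ M K x t * f x t)‖ ≤ bd x := by
    intro K
    obtain ⟨C, hC0, hC⟩ := coefC K
    refine ⟨fun x => ∑ j ∈ Finset.range (K+1), C * b (p + j) x, ?_, ?_⟩
    · exact integrable_finset_sum _ (fun j _ => (hbint (p+j)).const_mul C)
    · intro t ht x
      have htball : t ∈ Metric.ball m ε := hball2 ht
      have htcb : t ∈ Metric.closedBall m (ε/2) := Metric.ball_subset_closedBall ht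
      have h1 : ‖x ^ p * (B θ κ M K x t * f x t)‖
          ≤ ∑ j ∈ Finset.range (K+1), |c θ κ M K j t| * (|x| ^ (p+j) * f x t) := by
        rw [norm_eq_abs, abs_mul, abs_mul, abs_pow,
          abs_of_pos (hfpos x t), B]
        calc |x| ^ p * (|∑ j ∈ Finset.range (K+1), c θ κ M K j t * x ^ j| * f x t)
            ≤ |x| ^ p * ((∑ j ∈ Finset.range (K+1), |c θ κ M K j t| * |x| ^ j) * f x t) := by
              apply mul_le_mul_of_nonneg_left _ (by positivity)
              apply mul_le_mul_of_nonneg_right _ (hfpos x t).le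
              refine (Finset.abs_sum_le_sum_abs _ _).trans ?_
              apply Finset.sum_le_sum
              intro j _
              rw [abs_mul, abs_pow]
          _ = ∑ j ∈ Finset.range (K+1), |c θ κ M K j t| * (|x| ^ (p+j) * f x t) := by
              rw [Finset.sum_mul, Finset.mul_sum]
              apply Finset.sum_congr rfl
              intro j _
              rw [pow_add]
              ring
      refine h1.trans (Finset.sum_le_sum ?_)
      intro j hj
      have hb := hble (p+j) t htball x
      have hnn : 0 ≤ |x| ^ (p+j) * f x t := mul_nonneg (by positivity) (hfpos x t).le
      exact mul_le_mul (hC t htcb j hj) hb hnn hC0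
  obtain ⟨bd0, hbd0int, hbd0⟩ := mainBound k
  obtain ⟨bd1, hbd1int, hbd1⟩ := mainBound (k+1)
  have hmeas : ∀ (K : ℕ) (t : ℝ),
      AEStronglyMeasurable (fun x => x ^ p * (B θ κ M K x t * f x t)) ν := by
    intro K t
    have : Continuous (fun x => x ^ p * (B θ κ M K x t * f x t)) := by
      have hfc : Continuous (fun x => f x t) := by
        have : (fun x => f x t) = fun x => Real.exp (θ t * x - κ t) := funext fun x => hf x t
        rw [this]
        exact Real.continuous_exp.comp ((continuous_const.mul continuous_id).sub continuous_const)
      have hBc : Continuous (fun x => B θ κ M K x t) := by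
        unfold B
        exact continuous_finset_sum _ (fun j _ => continuous_const.mul (continuous_pow j))
      exact (continuous_pow p).mul (hBc.mul hfc)
    exact this.aestronglyMeasurable
  have hFint : Integrable (fun x => x ^ p * (B θ κ M k x m * f x m)) ν :=
    Integrable.mono' hbd0int (hmeas k m)
      (Filter.Eventually.of_forall fun x => hbd0 m (Metric.mem_ball_self hε2) x)
  refine ⟨hFint, ?_⟩
  have := hasDerivAt_integral_of_dominated_loc_of_deriv_le
    (F := fun t x => x ^ p * (B θ κ M k x t * f x t))
    (F' := fun t x => x ^ p * (B θ κ M (k+1) x t * f x t)) (bound := bd1)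
    (Metric.ball_mem_nhds m hε2) (Filter.Eventually.of_forall fun t => hmeas k t) hFint (hmeas (k+1) m)
    (Filter.Eventually.of_forall fun x => fun t ht => hbd1 t ht x) hbd1int
    (Filter.Eventually.of_forall fun x => fun t ht => ?_)
  · exact this.2
  · have htM : t ∈ M := hsub (hball2 ht)
    simp only [hf]
    exact (hasDerivAt_B_mul_exp hM hθ hκ x htM k).const_mul (x ^ p)

/-- `G` vanishes on `M` whenever `F` is locally constant with derivative `G`. -/
lemma deriv_eq_zero_of_const_on (hM : IsOpen M) {F G : ℝ → ℝ} {cst : ℝ}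
    (hF : ∀ m ∈ M, HasDerivAt F (G m) m) (hc : ∀ m ∈ M, F m = cst) :
    ∀ m ∈ M, G m = 0 := by
  intro m hm
  have h1 : HasDerivAt (fun _ => cst) (G m) m :=
    (hF m hm).congr_of_eventuallyEq
      (Filter.eventuallyEq_of_mem (hM.mem_nhds hm) fun u hu => (hc u hu).symm)
  exact h1.unique (hasDerivAt_const m cst)

lemma Xi_vanish (ν : Measure ℝ) (f : ℝ → ℝ → ℝ)
    (hf : ∀ x m, f x m = Real.exp (θ m * x - κ m))
    (hM : IsOpen M) (hθ : ContDiffOn ℝ ⊤ θ M) (hκ : ContDiffOn ℝ ⊤ κ M)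
    (hinj : Set.InjOn θ M)
    (hint : ∀ m ∈ M, Integrable (fun x => f x m) ν)
    (hnorm : ∀ m ∈ M, ∫ x, f x m ∂ν = 1)
    (hmean : ∀ m ∈ M, ∫ x, x * f x m ∂ν = m) :
    (∀ k, 1 ≤ k → ∀ m ∈ M, ∫ x, x ^ 0 * (B θ κ M k x m * f x m) ∂ν = 0) ∧
    (∀ k, 2 ≤ k → ∀ m ∈ M, ∫ x, x ^ 1 * (B θ κ M k x m * f x m) ∂ν = 0) := by
  set Xi : ℕ → ℕ → ℝ → ℝ := fun p k m => ∫ x, x ^ p * (B θ κ M k x m * f x m) ∂ν with hXi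
  have hstep : ∀ p k, ∀ m ∈ M, HasDerivAt (Xi p k) (Xi p (k+1) m) m := by
    intro p k m hm
    exact (interchange ν f hf hM hθ hκ hinj hint p k hm).2
  have base0 : ∀ m ∈ M, Xi 0 0 m = 1 := by
    intro m hm
    have : Xi 0 0 m = ∫ x, f x m ∂ν := by
      apply integral_congr_ae
      apply Filter.Eventually.of_forall
      intro x
      simp [B_zero]
    rw [this, hnorm m hm]
  have base1 : ∀ m ∈ M, Xi 1 0 m = m := by
    intro m hm
    have : Xi 1 0 m = ∫ x, x * f x m ∂ν := by
      apply integral_congr_ae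
      apply Filter.Eventually.of_forall
      intro x
      simp [B_zero]
    rw [this, hmean m hm]
  constructor
  · intro k hk
    induction k, hk using Nat.le_induction with
    | base => exact deriv_eq_zero_of_const_on hM (hstep 0 0) base0
    | succ k hk ih => exact deriv_eq_zero_of_const_on hM (hstep 0 k) ih
  · intro k hk
    have h11 : ∀ m ∈ M, Xi 1 1 m = 1 := by
      intro m hm
      have h1 : HasDerivAt (fun u => u) (Xi 1 1 m) m :=
        (hstep 1 0 m hm).congr_of_eventuallyEq
          (Filter.eventuallyEq_of_mem (hM.mem_nhds hm) fun u hu => (base1 u hu).symm)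
      exact h1.unique (hasDerivAt_id m)
    induction k, hk using Nat.le_induction with
    | base => exact deriv_eq_zero_of_const_on hM (hstep 1 1) h11
    | succ k hk ih => exact deriv_eq_zero_of_const_on hM (hstep 1 k) ih

end LMPO

open MeasureTheory LMPO in
/-- Parameter orthogonality at `λ = 0`: for a natural exponential family with quadratic
variance function, the `μ`-score and each `λᵢ`-score of the local mixture model
`g(x;μ,λ) = f(x;μ) + ∑ᵢ₌₂ʳ λᵢ f⁽ⁱ⁾(x;μ)` are orthogonal at `λ = 0`. -/
theorem local_mixture_parameter_orthogonality
    (ν : Measure ℝ) (θ κ : ℝ → ℝ) (f : ℝ → ℝ → ℝ)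
    (M : Set ℝ) (hM : IsOpen M)
    (hf : ∀ x m, f x m = Real.exp (θ m * x - κ m))
    (hθ : ContDiffOn ℝ ⊤ θ M) (hκ : ContDiffOn ℝ ⊤ κ M)
    (hnorm : ∀ m ∈ M, ∫ x, f x m ∂ν = 1)
    (hmean : ∀ m ∈ M, ∫ x, x * f x m ∂ν = m)
    (V : ℝ → ℝ)
    (hV : ∀ m ∈ M, V m = ∫ x, (x - m)^2 * f x m ∂ν)
    (hquad : ∃ a b c : ℝ, ∀ m ∈ M, V m = a * m^2 + b * m + c)
    (r : ℕ) (g : ℝ → ℝ → (ℕ → ℝ) → ℝ)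
    (hg : ∀ x m l, g x m l = f x m
        + ∑ i ∈ Finset.Icc 2 r, l i * iteratedDerivWithin i (fun u => f x u) M m) :
    ∀ μ ∈ M, ∀ i ∈ Finset.Icc 2 r,
      ∫ x, derivWithin (fun m => Real.log (g x m (fun _ => 0))) M μ
          * deriv (fun t => Real.log (g x μ (fun j => if j = i then t else 0))) 0
          * f x μ ∂ν = 0 := by
  intro μ hμ i hi
  have hi2 : 2 ≤ i := (Finset.mem_Icc.1 hi).1
  have hfpos : ∀ x m, 0 < f x m := by intro x m; rw [hf]; exact Real.exp_pos _
  -- integrability of f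
  have hintf : ∀ m ∈ M, Integrable (fun x => f x m) ν := by
    intro m hm
    by_contra hc
    have := hnorm m hm
    rw [integral_undef hc] at this
    exact zero_ne_one this
  -- injectivity of θ on M
  have hinj : Set.InjOn θ M := by
    intro a ha b hb hab
    have hκeq : κ a = κ b := by
      have h1 : ∀ x, f x a = Real.exp (κ b - κ a) * f x b := by
        intro x
        rw [hf, hf, ← Real.exp_add, hab]
        ring_nf
      have h2 : (1:ℝ) = Real.exp (κ b - κ a) := by
        calc (1:ℝ) = ∫ x, f x a ∂ν := (hnorm a ha).symm
          _ = ∫ x, Real.exp (κ b - κ a) * f x b ∂ν :=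
              integral_congr_ae (Filter.Eventually.of_forall h1)
          _ = Real.exp (κ b - κ a) * ∫ x, f x b ∂ν := integral_const_mul _ _
          _ = Real.exp (κ b - κ a) := by rw [hnorm b hb, mul_one]
      have h3 : κ b - κ a = 0 := (Real.exp_eq_one_iff _).1 h2.symm
      linarith
    have hfeq : ∀ x, f x a = f x b := fun x => by rw [hf, hf, hab, hκeq]
    have hcongr : ∀ x, x * f x a = x * f x b := fun x => by rw [hfeq x]
    calc a = ∫ x, x * f x a ∂ν := (hmean a ha).symm
      _ = ∫ x, x * f x b ∂ν :=
          integral_congr_ae (Filter.Eventually.of_forall hcongr)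
      _ = b := hmean b hb
  -- derivatives of θ and κ
  set dθ := derivWithin θ M μ with hdθ
  set dκ := derivWithin κ M μ with hdκ
  have hMn : M ∈ nhds μ := hM.mem_nhds hμ
  have hθd : HasDerivAt θ dθ μ := by
    rw [hdθ, derivWithin_of_isOpen hM hμ]
    exact ((hθ.differentiableOn (by simp) μ hμ).differentiableAt hMn).hasDerivAt
  have hκd : HasDerivAt κ dκ μ := by
    rw [hdκ, derivWithin_of_isOpen hM hμ]
    exact ((hκ.differentiableOn (by simp) μ hμ).differentiableAt hMn).hasDerivAt
  -- first score
  have score1 : ∀ x, derivWithin (fun m => Real.log (g x m (fun _ => 0))) M μ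
      = dθ * x - dκ := by
    intro x
    have hg0 : (fun m => Real.log (g x m (fun _ => 0))) = fun m => θ m * x - κ m := by
      funext m'
      rw [hg]
      simp [hf, Real.log_exp]
    rw [hg0, derivWithin_of_isOpen hM hμ, ((hθd.mul_const x).fun_sub hκd).deriv]
  -- second score
  have score2 : ∀ x, deriv (fun t => Real.log (g x μ (fun j => if j = i then t else 0))) 0
      = iteratedDerivWithin i (fun u => f x u) M μ / f x μ := by
    intro x
    set D := iteratedDerivWithin i (fun u => f x u) M μ with hD
    have hsum : (fun t => Real.log (g x μ (fun j => if j = i then t else 0)))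
        = fun t => Real.log (f x μ + t * D) := by
      funext t
      rw [hg]
      congr 2
      rw [Finset.sum_eq_single_of_mem i hi]
      · simp [hD]
      · intro b _ hb
        simp [hb]
    have h1 : HasDerivAt (fun t : ℝ => f x μ + t * D) D 0 := by
      simpa using ((hasDerivAt_id (0:ℝ)).mul_const D).const_add (f x μ)
    have h2 : HasDerivAt (fun t => Real.log (f x μ + t * D)) (D / f x μ) 0 := by
      have hne : f x μ + 0 * D ≠ 0 := by
        simp only [zero_mul, add_zero]
        exact (hfpos x μ).ne'
      have := h1.log hne
      simpa using this
    rw [hsum, h2.deriv]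
  -- the iterated derivative
  have hDval : ∀ x, iteratedDerivWithin i (fun u => f x u) M μ
      = B θ κ M i x μ * f x μ := by
    intro x
    have hfunext : (fun u => f x u) = fun u => Real.exp (θ u * x - κ u) :=
      funext fun u => hf x u
    rw [hfunext, iteratedDerivWithin_eq_B hM hθ hκ x i μ hμ, ← hf]
  -- rewrite the integrand
  have hEq : ∀ x, derivWithin (fun m => Real.log (g x m (fun _ => 0))) M μ
      * deriv (fun t => Real.log (g x μ (fun j => if j = i then t else 0))) 0
      * f x μ
      = dθ * (x ^ 1 * (B θ κ M i x μ * f x μ)) - dκ * (x ^ 0 * (B θ κ M i x μ * f x μ)) := by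
    intro x
    rw [score1 x, score2 x, hDval x]
    have hne : f x μ ≠ 0 := (hfpos x μ).ne'
    field_simp
  rw [integral_congr_ae (Filter.Eventually.of_forall hEq)]
  have hI1 : Integrable (fun x => x ^ 1 * (B θ κ M i x μ * f x μ)) ν :=
    (interchange ν f hf hM hθ hκ hinj hintf 1 i hμ).1
  have hI0 : Integrable (fun x => x ^ 0 * (B θ κ M i x μ * f x μ)) ν :=
    (interchange ν f hf hM hθ hκ hinj hintf 0 i hμ).1
  rw [integral_sub (hI1.const_mul dθ) (hI0.const_mul dκ), integral_const_mul,
    integral_const_mul]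
  obtain ⟨hvan0, hvan1⟩ := Xi_vanish ν f hf hM hθ hκ hinj hintf hnorm hmean
  rw [hvan0 i (by omega) μ hμ, hvan1 i hi2 μ hμ]
  ring
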